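/- Let n ≥ 2, α an invertible real n×n matrix, x̊ ∈ ℝ^n, y ≥ 0, B ∈ ℝ^{n×(n−1)} with linearly independent columns, x_c ∈ ℝ^n, and let Q ∈ ℝ^{n×(n−1)} with QᵀQ = I_{n−1} and invertible R ∈ ℝ^{(n−1)×(n−1)} satisfy αB = QR. Define ż = R⁻¹Qᵀα(x̊ − x_c), r = ‖α(x̊ − x_c)‖₂² − ‖Qᵀα(x̊ − x_c)‖₂², and suppose y² ≥ r. Let α₀ be an invertible real n×n matrix, x* ∈ ℝ^n, Δ : ℝ^n → ℝ^n, and set Δᴮ(z) = Δ(Bz + x_c). Suppose M₁, …, M_k ∈ ℝ^{n×(n−1)} (k ≥ 1) satisfy: for every z with ‖R(z − ż)‖₂ ≤ √(y² − r) there exists M in the convex hull of {M₁, …, M_k} with Δᴮ(z) − Δᴮ(ż) = M(z − ż). Then for every x in the intersection {x : ‖α(x − x̊)‖₂ ≤ y} ∩ {Bz + x_c : z ∈ ℝ^{n−1}}, ‖α₀(Δ(x) − x*)‖₂ ≤ ‖α₀(Δᴮ(ż) − x*)‖₂ + (max_{1≤j≤k} ‖α₀ M_j R⁻¹‖_{2→2})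 · √(y² − r). -/

import Mathlib

open Matrix

/-- Euclidean norm of a vector in `ℝ^n`. -/
noncomputable def enorm2 {n : ℕ} (v : Fin n → ℝ) : ℝ := Real.sqrt (∑ i, v i ^ 2)

/-- The `ℓ₂ → ℓ₂` induced operator norm of a real matrix. -/
noncomputable def opNorm2 {m n : ℕ} (A : Matrix (Fin m) (Fin n) ℝ) : ℝ :=
  ‖LinearMap.toContinuousLinearMap (Matrix.toEuclideanLin A)‖

lemma enorm2_eq_norm {n : ℕ} (v : Fin n → ℝ) :
    enorm2 v = ‖(WithLp.equiv 2 (Fin n → ℝ)).symm v‖ := by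
  rw [EuclideanSpace.norm_eq, enorm2]
  congr 1
  refine Finset.sum_congr rfl fun i _ => ?_
  simp [Real.norm_eq_abs, sq_abs]

lemma enorm2_nonneg {n : ℕ} (v : Fin n → ℝ) : 0 ≤ enorm2 v := Real.sqrt_nonneg _

lemma enorm2_add_le {n : ℕ} (a b : Fin n → ℝ) :
    enorm2 (a + b) ≤ enorm2 a + enorm2 b := by
  rw [enorm2_eq_norm, enorm2_eq_norm, enorm2_eq_norm]
  exact norm_add_le ((WithLp.equiv 2 (Fin n → ℝ)).symm a)
    ((WithLp.equiv 2 (Fin n → ℝ)).symm b)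

lemma enorm2_sq_eq_dot {n : ℕ} (v : Fin n → ℝ) : enorm2 v ^ 2 = v ⬝ᵥ v := by
  rw [enorm2, Real.sq_sqrt (by positivity)]
  simp [dotProduct, sq]

lemma enorm2_mulVec_le {m n : ℕ} (A : Matrix (Fin m) (Fin n) ℝ) (v : Fin n → ℝ) :
    enorm2 (A.mulVec v) ≤ opNorm2 A * enorm2 v := by
  rw [enorm2_eq_norm, enorm2_eq_norm]
  have := (LinearMap.toContinuousLinearMap (Matrix.toEuclideanLin A)).le_opNorm
    ((WithLp.equiv 2 (Fin n → ℝ)).symm v)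
  simpa [opNorm2, Matrix.toEuclideanLin_apply_piLp_toLp] using this

lemma opNorm2_nonneg {m n : ℕ} (A : Matrix (Fin m) (Fin n) ℝ) : 0 ≤ opNorm2 A :=
  norm_nonneg _

/-- Maximum principle for `opNorm2` of a sandwiched matrix over a convex hull. -/
lemma opNorm2_convexHull_le {a b c d : ℕ} (P : Matrix (Fin a) (Fin b) ℝ)
    (S : Matrix (Fin c) (Fin d) ℝ) {s : Set (Matrix (Fin b) (Fin c) ℝ)}
    {A : Matrix (Fin b) (Fin c) ℝ} (hA : A ∈ convexHull ℝ s) :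
    ∃ Y ∈ s, opNorm2 (P * A * S) ≤ opNorm2 (P * Y * S) := by
  let L : Matrix (Fin b) (Fin c) ℝ →ₗ[ℝ]
      (EuclideanSpace ℝ (Fin d) →L[ℝ] EuclideanSpace ℝ (Fin a)) :=
    { toFun := fun X => LinearMap.toContinuousLinearMap (Matrix.toEuclideanLin (P * X * S))
      map_add' := by
        intro X Y
        simp [Matrix.mul_add, Matrix.add_mul, map_add]
      map_smul' := by
        intro t X
        simp [Matrix.mul_smul, Matrix.smul_mul, _root_.map_smul] }
  have hconv : ConvexOn ℝ Set.univ (fun X : Matrix (Fin b) (Fin c) ℝ => opNorm2 (P * X * S)) := by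
    have h := (convexOn_norm (convex_univ
      (E := EuclideanSpace ℝ (Fin d) →L[ℝ] EuclideanSpace ℝ (Fin a)))).comp_linearMap L
    exact h
  exact hconv.exists_ge_of_mem_convexHull (Set.subset_univ s) hA

/-- **Fixed-time-slice gain bound (Theorem 2, single slice).**
Every point `x` in the intersection of the ellipsoid `{x : ‖α(x − x̊)‖₂ ≤ y}` with the
affine subspace `{Bz + x_c}`, mapped through the reset map `Δ` and measured in the
initial norm `‖α₀ ·‖₂` about `x*`, satisfies the center-plus-radius bound. -/
theorem slice_reset_gain_bound {n k : ℕ} (hn : 2 ≤ n) (hk : 1 ≤ k)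
    (α : Matrix (Fin n) (Fin n) ℝ) (hα : IsUnit α)
    (xc : Fin n → ℝ) (y : ℝ) (hy : 0 ≤ y)
    (B : Matrix (Fin n) (Fin (n - 1)) ℝ)
    (hB : LinearIndependent ℝ (fun j : Fin (n - 1) => Bᵀ j))
    (xC : Fin n → ℝ)
    (Q : Matrix (Fin n) (Fin (n - 1)) ℝ) (hQ : Qᵀ * Q = 1)
    (R : Matrix (Fin (n - 1)) (Fin (n - 1)) ℝ) (hR : IsUnit R)
    (hQR : α * B = Q * R)
    (zc : Fin (n - 1) → ℝ)
    (hzc : zc = R⁻¹.mulVec (Qᵀ.mulVec (α.mulVec (xc - xC))))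
    (r : ℝ)
    (hr : r = enorm2 (α.mulVec (xc - xC)) ^ 2
        - enorm2 (Qᵀ.mulVec (α.mulVec (xc - xC))) ^ 2)
    (hyr : r ≤ y ^ 2)
    (α₀ : Matrix (Fin n) (Fin n) ℝ) (hα₀ : IsUnit α₀)
    (xs : Fin n → ℝ)
    (Δ : (Fin n → ℝ) → (Fin n → ℝ))
    (M : Fin k → Matrix (Fin n) (Fin (n - 1)) ℝ)
    (hM : ∀ z : Fin (n - 1) → ℝ,
      enorm2 (R.mulVec (z - zc)) ≤ Real.sqrt (y ^ 2 - r) →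
      ∃ A ∈ convexHull ℝ (Set.range M),
        Δ (B.mulVec z + xC) - Δ (B.mulVec zc + xC) = A.mulVec (z - zc)) :
    ∀ x ∈ {x : Fin n → ℝ | enorm2 (α.mulVec (x - xc)) ≤ y} ∩
        {w : Fin n → ℝ | ∃ z : Fin (n - 1) → ℝ, w = B.mulVec z + xC},
      enorm2 (α₀.mulVec (Δ x - xs)) ≤
        enorm2 (α₀.mulVec (Δ (B.mulVec zc + xC) - xs))
          + (⨆ j : Fin k, opNorm2 (α₀ * M j * R⁻¹)) * Real.sqrt (y ^ 2 - r) := by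
  have hRdet : IsUnit R.det := (Matrix.isUnit_iff_isUnit_det R).mp hR
  haveI : Nonempty (Fin k) := ⟨⟨0, hk⟩⟩
  rintro x ⟨hx1, z, rfl⟩
  -- abbreviations
  set w : Fin n → ℝ := α.mulVec (xc - xC) with hw
  set q : Fin (n - 1) → ℝ := Qᵀ.mulVec w with hq
  -- R zc = q
  have hRzc : R.mulVec zc = q := by
    rw [hzc, Matrix.mulVec_mulVec, Matrix.mul_nonsing_inv R hRdet, Matrix.one_mulVec]
  -- key orthogonality identities
  have hQdot : ∀ (a : Fin (n - 1) → ℝ) (b : Fin n → ℝ),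
      Q.mulVec a ⬝ᵥ b = a ⬝ᵥ Qᵀ.mulVec b := by
    intro a b
    rw [dotProduct_comm, Matrix.dotProduct_mulVec, ← Matrix.mulVec_transpose,
      dotProduct_comm]
  have hQQ : ∀ a : Fin (n - 1) → ℝ, Q.mulVec a ⬝ᵥ Q.mulVec a = a ⬝ᵥ a := by
    intro a
    rw [hQdot, Matrix.mulVec_mulVec, hQ, Matrix.one_mulVec]
  -- geometry: the slice ball bound
  set p : Fin (n - 1) → ℝ := R.mulVec z with hp
  have hx_eq : α.mulVec (B.mulVec z + xC - xc) = Q.mulVec p - w := by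
    have h1 : B.mulVec z + xC - xc = B.mulVec z - (xc - xC) := by abel
    rw [h1, Matrix.mulVec_sub, ← hw, Matrix.mulVec_mulVec, hQR, ← Matrix.mulVec_mulVec]
  have hRdiff : R.mulVec (z - zc) = p - q := by
    rw [Matrix.mulVec_sub, hRzc]
  have hdot_id : (Q.mulVec p - w) ⬝ᵥ (Q.mulVec p - w)
      = (p - q) ⬝ᵥ (p - q) + (w ⬝ᵥ w - q ⬝ᵥ q) := by
    have h1 : Q.mulVec p ⬝ᵥ w = p ⬝ᵥ q := by rw [hQdot]
    have h2 : w ⬝ᵥ Q.mulVec p = p ⬝ᵥ q := by rw [dotProduct_comm, h1]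
    have h3 := hQQ p
    simp only [sub_dotProduct, dotProduct_sub, h1, h2, h3,
      dotProduct_comm q p]
    ring
  have hball : enorm2 (R.mulVec (z - zc)) ≤ Real.sqrt (y ^ 2 - r) := by
    have hsq : enorm2 (R.mulVec (z - zc)) ^ 2 ≤ y ^ 2 - r := by
      have e1 : enorm2 (α.mulVec (B.mulVec z + xC - xc)) ^ 2
          = enorm2 (R.mulVec (z - zc)) ^ 2 + r := by
        rw [enorm2_sq_eq_dot, hx_eq, hdot_id, hRdiff, enorm2_sq_eq_dot, hr,
          enorm2_sq_eq_dot, enorm2_sq_eq_dot]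
      have e2 : enorm2 (α.mulVec (B.mulVec z + xC - xc)) ^ 2 ≤ y ^ 2 :=
        pow_le_pow_left₀ (enorm2_nonneg _) hx1 2
      linarith
    exact (Real.le_sqrt (enorm2_nonneg _) (by linarith [sq_nonneg y])).mpr hsq
  obtain ⟨A, hAhull, hAeq⟩ := hM z hball
  -- decompose the mapped point
  have hdecomp : α₀.mulVec (Δ (B.mulVec z + xC) - xs)
      = α₀.mulVec (Δ (B.mulVec zc + xC) - xs) + α₀.mulVec (A.mulVec (z - zc)) := by
    rw [← Matrix.mulVec_add]
    congr 1
    rw [← hAeq]; abel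
  have htri : enorm2 (α₀.mulVec (Δ (B.mulVec z + xC) - xs))
      ≤ enorm2 (α₀.mulVec (Δ (B.mulVec zc + xC) - xs))
        + enorm2 (α₀.mulVec (A.mulVec (z - zc))) := by
    rw [hdecomp]; exact enorm2_add_le _ _
  -- bound the radius term
  have hfactor : α₀.mulVec (A.mulVec (z - zc))
      = (α₀ * A * R⁻¹).mulVec (R.mulVec (z - zc)) := by
    rw [Matrix.mulVec_mulVec, Matrix.mulVec_mulVec, Matrix.mul_assoc (α₀ * A),
      Matrix.nonsing_inv_mul R hRdet, Matrix.mul_one]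
  obtain ⟨Y, hY, hYle⟩ := opNorm2_convexHull_le α₀ R⁻¹ hAhull
  obtain ⟨j, rfl⟩ := hY
  have hsup : opNorm2 (α₀ * M j * R⁻¹) ≤ ⨆ i : Fin k, opNorm2 (α₀ * M i * R⁻¹) :=
    le_ciSup (f := fun i : Fin k => opNorm2 (α₀ * M i * R⁻¹))
      (Set.Finite.bddAbove (Set.finite_range _)) j
  have hrad : enorm2 (α₀.mulVec (A.mulVec (z - zc)))
      ≤ (⨆ i : Fin k, opNorm2 (α₀ * M i * R⁻¹)) * Real.sqrt (y ^ 2 - r) := by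
    rw [hfactor]
    calc enorm2 ((α₀ * A * R⁻¹).mulVec (R.mulVec (z - zc)))
        ≤ opNorm2 (α₀ * A * R⁻¹) * enorm2 (R.mulVec (z - zc)) := enorm2_mulVec_le _ _
      _ ≤ (⨆ i : Fin k, opNorm2 (α₀ * M i * R⁻¹)) * Real.sqrt (y ^ 2 - r) :=
          mul_le_mul (le_trans hYle hsup) hball (enorm2_nonneg _)
            (le_trans (opNorm2_nonneg _) hsup)
  linarith
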